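/- With L, T, τ_z, δ and δ_z as above, if δ additionally satisfies the co-Jacobi identity (δ⊗1)δ - (1⊗δ)δ + (τ⊗1)(1⊗δ)δ = 0 (τ = flip of the first two tensor factors), then the translated co-Jacobi identity holds: (δ_{z₁-z₂}⊗1)δ_{z₂} - (1⊗δ_{z₂})δ_{z₁} + (τ⊗1)(1⊗δ_{z₁})δ_{z₂} = 0. -/

import Mathlib

open TensorProduct Finset

/-- Triangle sum equals grid sum when terms with large index sum vanish. -/
lemma tri_eq_grid {A : Type*} [AddCommMonoid A] (f : ℕ → ℕ → A) (N : ℕ)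
    (h : ∀ i j, N ≤ i + j → f i j = 0) :
    (∑ n ∈ Finset.range N, ∑ i ∈ Finset.range (n + 1), f i (n - i))
      = ∑ i ∈ Finset.range N, ∑ j ∈ Finset.range N, f i j := by
  classical
  rw [← Finset.sum_product']
  rw [Finset.sum_sigma' (Finset.range N) (fun n => Finset.range (n + 1))
    (fun n i => f i (n - i))]
  have hsub : ∑ p ∈ Finset.range N ×ˢ Finset.range N, f p.1 p.2
      = ∑ p ∈ (Finset.range N ×ˢ Finset.range N).filter (fun p => p.1 + p.2 < N),
          f p.1 p.2 := by
    refine (Finset.sum_subset (Finset.filter_subset _ _) ?_).symm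
    intro p hp hnp
    simp only [Finset.mem_filter, not_and, not_lt] at hnp
    exact h _ _ (hnp hp)
  rw [hsub]
  refine Finset.sum_nbij' (i := fun x => (x.2, x.1 - x.2)) (j := fun p => ⟨p.1 + p.2, p.1⟩)
    ?_ ?_ ?_ ?_ ?_
  · rintro ⟨n, i⟩ hx
    simp only [Finset.mem_sigma, Finset.mem_range] at hx
    simp only [Finset.mem_filter, Finset.mem_product, Finset.mem_range]
    omega
  · rintro ⟨a, b⟩ hp
    simp only [Finset.mem_filter, Finset.mem_product, Finset.mem_range] at hp
    simp only [Finset.mem_sigma, Finset.mem_range]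
    omega
  · rintro ⟨n, i⟩ hx
    simp only [Finset.mem_sigma, Finset.mem_range] at hx
    simp only [Sigma.mk.inj_iff]
    exact ⟨by omega, HEq.rfl⟩
  · rintro ⟨a, b⟩ hp
    simp
  · rintro ⟨n, i⟩ hx
    rfl

lemma coeff_1 {k : Type*} [Field k] [CharZero k] (w z : k) {i p : ℕ} (h : i ≤ p) :
    w ^ i * z ^ (p - i) * (p.choose i : k) / (p.factorial : k)
      = z ^ (p - i) / ((p - i).factorial : k) * (w ^ i / (i.factorial : k)) := by
  have hc := Nat.choose_mul_factorial_mul_factorial h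
  have hcast : (p.choose i : k) * (i.factorial : k) * ((p - i).factorial : k)
      = (p.factorial : k) := by exact_mod_cast congrArg (Nat.cast : ℕ → k) hc
  have h1 : (i.factorial : k) ≠ 0 := Nat.cast_ne_zero.2 i.factorial_ne_zero
  have h2 : ((p - i).factorial : k) ≠ 0 := Nat.cast_ne_zero.2 (p - i).factorial_ne_zero
  have h3 : (p.factorial : k) ≠ 0 := Nat.cast_ne_zero.2 p.factorial_ne_zero
  field_simp
  linear_combination (w ^ i * z ^ (p - i)) * hcast

lemma coeff_2 {k : Type*} [Field k] [CharZero k] (w : k) {i n : ℕ} (h : i ≤ n) :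
    w ^ n / (n.factorial : k) * (n.choose i : k)
      = w ^ i / (i.factorial : k) * (w ^ (n - i) / ((n - i).factorial : k)) := by
  have hw : w ^ n = w ^ i * w ^ (n - i) := by
    rw [← pow_add, Nat.add_sub_cancel' h]
  rw [hw, div_mul_eq_mul_div, coeff_1 w w h]
  ring

lemma mapmap {R : Type*} [CommSemiring R] {A B C A' B' C' : Type*}
    [AddCommMonoid A] [AddCommMonoid B] [AddCommMonoid C]
    [AddCommMonoid A'] [AddCommMonoid B'] [AddCommMonoid C']
    [Module R A] [Module R B] [Module R C] [Module R A'] [Module R B'] [Module R C']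
    (f₂ : B →ₗ[R] C) (f₁ : A →ₗ[R] B) (g₂ : B' →ₗ[R] C') (g₁ : A' →ₗ[R] B')
    (u : A ⊗[R] A') :
    TensorProduct.map f₂ g₂ (TensorProduct.map f₁ g₁ u)
      = TensorProduct.map (f₂ ∘ₗ f₁) (g₂ ∘ₗ g₁) u := by
  rw [TensorProduct.map_comp]; rfl

theorem translated_coJacobi_identity {k L : Type*} [Field k] [CharZero k]
    [LieRing L] [LieAlgebra k L]
    (T : L →ₗ[k] L)
    (hder : ∀ x y : L, T ⁅x, y⁆ = ⁅T x, y⁆ + ⁅x, T y⁆)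
    (hnil : ∀ x : L, ∃ N, (T ^ N) x = 0)
    (τ : k → L →ₗ[k] L)
    (hτ : ∀ (z : k) (x : L) (N : ℕ), (T ^ N) x = 0 →
      τ z x = ∑ n ∈ Finset.range N, (z ^ n / (n.factorial : k)) • (T ^ n) x)
    (δ : L →ₗ[k] L ⊗[k] L)
    (hcoc : ∀ x y : L, δ ⁅x, y⁆ = ⁅x, δ y⁆ - ⁅y, δ x⁆)
    (hTδ : ∀ x : L, δ (T x)
      = TensorProduct.map T LinearMap.id (δ x) + TensorProduct.map LinearMap.id T (δ x))
    (σ : L ⊗[k] (L ⊗[k] L) →ₗ[k] L ⊗[k] (L ⊗[k] L))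
    (hσ : ∀ a b c : L, σ (a ⊗ₜ[k] (b ⊗ₜ[k] c)) = b ⊗ₜ[k] (a ⊗ₜ[k] c))
    (hcoJ : ∀ x : L,
      (TensorProduct.assoc k L L L) (TensorProduct.map δ LinearMap.id (δ x))
        - TensorProduct.map LinearMap.id δ (δ x)
        + σ (TensorProduct.map LinearMap.id δ (δ x)) = 0)
    (δz : k → L →ₗ[k] L ⊗[k] L)
    (hδz : ∀ (w : k) (x : L), δz w x = TensorProduct.map (τ w) LinearMap.id (δ x)) :
    ∀ (z₁ z₂ : k) (x : L),
      (TensorProduct.assoc k L L L) (TensorProduct.map (δz (z₁ - z₂)) LinearMap.id (δz z₂ x))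
        - TensorProduct.map LinearMap.id (δz z₂) (δz z₁ x)
        + σ (TensorProduct.map LinearMap.id (δz z₁) (δz z₂ x)) = 0 := by
  -- basic power vanishing
  have hpow : ∀ (x : L) (N : ℕ), (T ^ N) x = 0 → ∀ p, N ≤ p → (T ^ p) x = 0 := by
    intro x N h0 p hp
    have hsplit : T ^ p = T ^ (p - N) * T ^ N := by
      rw [← pow_add]; congr 1; omega
    rw [hsplit, Module.End.mul_apply, h0, map_zero]
  -- flexible exponential formula
  have hτ' : ∀ (z : k) (x : L) (N : ℕ), (T ^ N) x = 0 → ∀ P, N ≤ P →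
      τ z x = ∑ n ∈ Finset.range P, (z ^ n / (n.factorial : k)) • (T ^ n) x :=
    fun z x N h0 P hP => hτ z x P (hpow x N h0 P hP)
  -- group law
  have hgrp : ∀ (w z : k) (x : L), τ w (τ z x) = τ (w + z) x := by
    intro w z x
    obtain ⟨N, hN⟩ := hnil x
    rw [hτ z x N hN, map_sum]
    have hterm : ∀ n, τ w ((T ^ n) x)
        = ∑ m ∈ Finset.range N, (w ^ m / (m.factorial : k)) • (T ^ (m + n)) x := by
      intro n
      have h0 : (T ^ N) ((T ^ n) x) = 0 := by
        rw [← Module.End.mul_apply, ← pow_add]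
        exact hpow x N hN _ (by omega)
      rw [hτ w _ N h0]
      refine Finset.sum_congr rfl fun m _ => ?_
      rw [← Module.End.mul_apply, ← pow_add]
    simp_rw [map_smul, hterm, Finset.smul_sum, smul_smul]
    rw [hτ (w + z) x N hN, Finset.sum_comm]
    rw [← tri_eq_grid
      (f := fun i j => (z ^ j / (j.factorial : k) * (w ^ i / (i.factorial : k)))
        • (T ^ (i + j)) x) N
      (fun i j hij => by rw [hpow x N hN _ hij, smul_zero])]
    refine Finset.sum_congr rfl fun p hp => ?_
    rw [add_pow, Finset.sum_div, Finset.sum_smul]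
    refine Finset.sum_congr rfl fun i hi => ?_
    rw [Finset.mem_range] at hi
    have hip : i ≤ p := by omega
    rw [coeff_1 w z hip, Nat.add_sub_cancel' hip]
  -- iterated derivation identity
  have hkey : ∀ (n : ℕ) (y : L), δ ((T ^ n) y)
      = (((TensorProduct.map T LinearMap.id + TensorProduct.map LinearMap.id T :
            Module.End k (L ⊗[k] L))) ^ n) (δ y) := by
    intro n
    induction n with
    | zero => intro y; simp
    | succ n ih =>
      intro y
      have h1 : δ ((T ^ (n + 1)) y) = δ ((T ^ n) (T y)) := by
        rw [pow_succ, Module.End.mul_apply]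
      rw [h1, ih (T y), pow_succ, Module.End.mul_apply, LinearMap.add_apply, hTδ y]
  have hApow : ∀ i : ℕ, (TensorProduct.map T (LinearMap.id : L →ₗ[k] L)) ^ i
      = TensorProduct.map (T ^ i) LinearMap.id := by
    intro i
    induction i with
    | zero => simp only [pow_zero, Module.End.one_eq_id, TensorProduct.map_id]
    | succ i ih =>
      rw [pow_succ, ih, pow_succ, Module.End.mul_eq_comp, Module.End.mul_eq_comp,
        ← TensorProduct.map_comp, LinearMap.id_comp]
  have hBpow : ∀ i : ℕ, (TensorProduct.map (LinearMap.id : L →ₗ[k] L) T) ^ i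
      = TensorProduct.map LinearMap.id (T ^ i) := by
    intro i
    induction i with
    | zero => simp only [pow_zero, Module.End.one_eq_id, TensorProduct.map_id]
    | succ i ih =>
      rw [pow_succ, ih, pow_succ, Module.End.mul_eq_comp, Module.End.mul_eq_comp,
        ← TensorProduct.map_comp, LinearMap.id_comp]
  have hAB : Commute (TensorProduct.map T (LinearMap.id : L →ₗ[k] L))
      (TensorProduct.map LinearMap.id T) := by
    show _ * _ = _ * _
    simp only [Module.End.mul_eq_comp, ← TensorProduct.map_comp, LinearMap.id_comp,
      LinearMap.comp_id]
  -- binomial expansion of δ ∘ Tⁿ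
  have hδT : ∀ (n : ℕ) (y : L), δ ((T ^ n) y)
      = ∑ i ∈ Finset.range (n + 1),
          ((n.choose i : k)) • TensorProduct.map (T ^ i) (T ^ (n - i)) (δ y) := by
    intro n y
    rw [hkey n y, hAB.add_pow, LinearMap.sum_apply]
    refine Finset.sum_congr rfl fun i hi => ?_
    rw [Module.End.mul_apply, Module.End.natCast_apply, map_nsmul, Module.End.mul_apply,
      hApow, hBpow, mapmap, LinearMap.comp_id, LinearMap.id_comp,
      Nat.cast_smul_eq_nsmul k]
  -- exponential of a tensor
  have htensor : ∀ (w w' : k) (u : L ⊗[k] L), ∃ M : ℕ,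
      (∀ i j, M ≤ i ∨ M ≤ j → TensorProduct.map (T ^ i) (T ^ j) u = 0) ∧
      ∀ P, M ≤ P → TensorProduct.map (τ w) (τ w') u
        = ∑ i ∈ Finset.range P, ∑ j ∈ Finset.range P,
            ((w ^ i / (i.factorial : k)) * (w' ^ j / (j.factorial : k)))
              • TensorProduct.map (T ^ i) (T ^ j) u := by
    intro w w' u
    induction u using TensorProduct.induction_on with
    | zero => exact ⟨0, fun i j _ => by simp, fun P _ => by simp⟩
    | tmul a b =>
      obtain ⟨Na, ha⟩ := hnil a
      obtain ⟨Nb, hb⟩ := hnil b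
      refine ⟨max Na Nb, ?_, ?_⟩
      · intro i j hij
        rw [TensorProduct.map_tmul]
        rcases hij with hij | hij
        · rw [hpow a Na ha i (by omega), TensorProduct.zero_tmul]
        · rw [hpow b Nb hb j (by omega), TensorProduct.tmul_zero]
      · intro P hP
        rw [TensorProduct.map_tmul, hτ' w a Na ha P (by omega), hτ' w' b Nb hb P (by omega),
          TensorProduct.sum_tmul]
        refine Finset.sum_congr rfl fun i _ => ?_
        rw [← TensorProduct.smul_tmul', TensorProduct.tmul_sum, Finset.smul_sum]
        refine Finset.sum_congr rfl fun j _ => ?_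
        rw [TensorProduct.tmul_smul, TensorProduct.map_tmul, smul_smul]
    | add u v hu hv =>
      obtain ⟨Mu, hu1, hu2⟩ := hu
      obtain ⟨Mv, hv1, hv2⟩ := hv
      refine ⟨max Mu Mv, ?_, ?_⟩
      · intro i j hij
        rw [map_add, hu1 i j (by omega), hv1 i j (by omega), add_zero]
      · intro P hP
        rw [map_add, hu2 P (by omega), hv2 P (by omega)]
        simp only [map_add, smul_add, Finset.sum_add_distrib]
  -- commutation of δ with τ
  have hcommδ : ∀ (w : k) (y : L), δ (τ w y)
      = TensorProduct.map (τ w) (τ w) (δ y) := by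
    intro w y
    obtain ⟨N, hN⟩ := hnil y
    obtain ⟨M, hv, he⟩ := htensor w w (δ y)
    rw [hτ' w y N hN (N + 2 * M) (by omega), map_sum]
    rw [he (N + 2 * M) (by omega)]
    rw [← tri_eq_grid
      (f := fun i j => ((w ^ i / (i.factorial : k)) * (w ^ j / (j.factorial : k)))
        • TensorProduct.map (T ^ i) (T ^ j) (δ y)) (N + 2 * M)
      (fun i j hij => by
        rw [hv i j (by omega), smul_zero])]
    refine Finset.sum_congr rfl fun n hn => ?_
    rw [map_smul, hδT n y, Finset.smul_sum]
    refine Finset.sum_congr rfl fun i hi => ?_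
    rw [Finset.mem_range] at hi
    have hin : i ≤ n := by omega
    rw [smul_smul, coeff_2 w hin]
  -- naturality of the associator
  have hassoc : ∀ (f g h : L →ₗ[k] L) (t : (L ⊗[k] L) ⊗[k] L),
      (TensorProduct.assoc k L L L) (TensorProduct.map (TensorProduct.map f g) h t)
        = TensorProduct.map f (TensorProduct.map g h) ((TensorProduct.assoc k L L L) t) := by
    intro f g h t
    have heq : (TensorProduct.assoc k L L L).toLinearMap ∘ₗ
          TensorProduct.map (TensorProduct.map f g) h
        = TensorProduct.map f (TensorProduct.map g h) ∘ₗ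
            (TensorProduct.assoc k L L L).toLinearMap :=
      TensorProduct.ext_threefold fun a b c => by simp
    simpa using LinearMap.congr_fun heq t
  -- naturality of σ
  have hσnat : ∀ (f g : L →ₗ[k] L) (t : L ⊗[k] (L ⊗[k] L)),
      σ (TensorProduct.map f (TensorProduct.map g LinearMap.id) t)
        = TensorProduct.map g (TensorProduct.map f LinearMap.id) (σ t) := by
    intro f g t
    induction t using TensorProduct.induction_on with
    | zero => simp
    | tmul a u =>
      induction u using TensorProduct.induction_on with
      | zero => simp
      | tmul b c =>
        simp only [TensorProduct.map_tmul, LinearMap.id_apply, hσ]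
      | add u v hu hv =>
        simp only [TensorProduct.tmul_add, map_add] at hu hv ⊢
        rw [hu, hv]
    | add t s ht hs =>
      simp only [map_add, ht, hs]
  -- assembly
  intro z₁ z₂ x
  have hw : (z₁ - z₂) + z₂ = z₁ := sub_add_cancel _ _
  have hδzτ : δz (z₁ - z₂) ∘ₗ τ z₂ = TensorProduct.map (τ z₁) (τ z₂) ∘ₗ δ := by
    refine LinearMap.ext fun y => ?_
    simp only [LinearMap.comp_apply]
    rw [hδz, hcommδ, mapmap]
    have h1 : τ (z₁ - z₂) ∘ₗ τ z₂ = τ z₁ := by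
      refine LinearMap.ext fun a => ?_
      rw [LinearMap.comp_apply, hgrp, hw]
    rw [h1, LinearMap.id_comp]
  have hδzc : ∀ u : k, δz u = TensorProduct.map (τ u) LinearMap.id ∘ₗ δ :=
    fun u => LinearMap.ext fun y => by rw [hδz]; rfl
  -- term A
  have hA : TensorProduct.map (δz (z₁ - z₂)) LinearMap.id (δz z₂ x)
      = TensorProduct.map (TensorProduct.map (τ z₁) (τ z₂)) LinearMap.id
          (TensorProduct.map δ LinearMap.id (δ x)) := by
    rw [hδz z₂ x, mapmap, hδzτ, LinearMap.id_comp]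
    have h2 := mapmap (TensorProduct.map (τ z₁) (τ z₂)) δ
      (LinearMap.id : L →ₗ[k] L) LinearMap.id (δ x)
    rw [LinearMap.id_comp] at h2
    exact h2.symm
  -- term B
  have hB : TensorProduct.map LinearMap.id (δz z₂) (δz z₁ x)
      = TensorProduct.map (τ z₁) (TensorProduct.map (τ z₂) LinearMap.id)
          (TensorProduct.map LinearMap.id δ (δ x)) := by
    rw [hδz z₁ x, mapmap, LinearMap.id_comp, LinearMap.comp_id]
    have h2 := mapmap (τ z₁) (LinearMap.id : L →ₗ[k] L)
      (TensorProduct.map (τ z₂) LinearMap.id) δ (δ x)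
    rw [LinearMap.comp_id] at h2
    rw [h2, hδzc z₂]
  -- term C
  have hC : TensorProduct.map LinearMap.id (δz z₁) (δz z₂ x)
      = TensorProduct.map (τ z₂) (TensorProduct.map (τ z₁) LinearMap.id)
          (TensorProduct.map LinearMap.id δ (δ x)) := by
    rw [hδz z₂ x, mapmap, LinearMap.id_comp, LinearMap.comp_id]
    have h2 := mapmap (τ z₂) (LinearMap.id : L →ₗ[k] L)
      (TensorProduct.map (τ z₁) LinearMap.id) δ (δ x)
    rw [LinearMap.comp_id] at h2
    rw [h2, hδzc z₁]
  rw [hA, hB, hC, hassoc (τ z₁) (τ z₂) LinearMap.id (TensorProduct.map δ LinearMap.id (δ x)),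
    hσnat (τ z₂) (τ z₁) (TensorProduct.map LinearMap.id δ (δ x)),
    ← map_sub, ← map_add, hcoJ x, map_zero]
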